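/- Let P_1, …, P_m be convex polyhedra in ℝ^d, each the intersection of finitely many closed halfspaces, and let S ⊆ {1, …, m} be nonempty. Then every extreme point of the intersection ⋂_{j ∈ S} P_j is a vertex of the subdivision induced by P_1, …, P_m. -/
import Mathlib

open Set

/-- A closed halfspace: `{x | f x ≤ a}` for a nonzero linear functional `f`. -/
def IsClosedHalfspace (V : Type*) [AddCommGroup V] [Module ℝ V] (h : Set V) : Prop :=
  ∃ (f : V →ₗ[ℝ] ℝ) (a : ℝ), f ≠ 0 ∧ h = {x | f x ≤ a}

/-- A convex polyhedron: the intersection of finitely many closed halfspaces. -/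
def IsPolyhedron (V : Type*) [AddCommGroup V] [Module ℝ V] (P : Set V) : Prop :=
  ∃ (k : ℕ) (H : Fin k → Set V), (∀ i, IsClosedHalfspace V (H i)) ∧ P = ⋂ i, H i

/-- `minFace P p` is the intersection of `P` with all hyperplanes `{x | f x = a}`
(`f` a nonzero linear functional) such that `f p = a` and `P ⊆ {x | f x ≤ a}`;
this is the face `F(p)` of `P` at `p`.  If there is no such hyperplane, it is `P`. -/
def minFace {V : Type*} [AddCommGroup V] [Module ℝ V] (P : Set V) (p : V) : Set V :=
  P ∩ ⋂ (f : V →ₗ[ℝ] ℝ) (a : ℝ) (_ : f ≠ 0) (_ : f p = a) (_ : P ⊆ {x | f x ≤ a}),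
    {x | f x = a}

/-- `p` is a vertex of the subdivision induced by the polyhedra `P j`:
the intersection of the faces `minFace (P j) p`, over all `j` with `p ∈ P j`,
equals `{p}`. -/
def IsSubdivVertex {V : Type*} [AddCommGroup V] [Module ℝ V] {ι : Type*}
    (P : ι → Set V) (p : V) : Prop :=
  (⋂ j ∈ {j | p ∈ P j}, minFace (P j) p) = {p}

open Filter Topology

lemma minFace_key {V : Type*} [AddCommGroup V] [Module ℝ V] {P : Set V}
    (hP : IsPolyhedron V P) {p x : V} (hpP : p ∈ P) (hx : x ∈ minFace P p) :
    ∀ᶠ t : ℝ in 𝓝 0, p + t • (x - p) ∈ P ∧ p - t • (x - p) ∈ P := by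
  obtain ⟨k, H, hH, rfl⟩ := hP
  have hsub : ∀ i, (⋂ i, H i) ⊆ H i := fun i => Set.iInter_subset H i
  obtain ⟨hxP, hxF⟩ := hx
  simp only [Set.mem_iInter] at hxF
  suffices h : ∀ i, ∀ᶠ t : ℝ in 𝓝 0, p + t • (x - p) ∈ H i ∧ p - t • (x - p) ∈ H i by
    have h2 := Filter.eventually_all.2 h
    filter_upwards [h2] with t ht
    exact ⟨Set.mem_iInter.2 fun i => (ht i).1, Set.mem_iInter.2 fun i => (ht i).2⟩
  intro i
  obtain ⟨f, a, hf, hHi⟩ := hH i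
  rw [hHi]
  have hpa : f p ≤ a := by
    have := hsub i hpP; rw [hHi] at this; exact this
  simp only [Set.mem_setOf_eq, map_add, map_smul, map_sub, smul_eq_mul]
  rcases eq_or_lt_of_le hpa with heq | hlt
  · have hxa : f x = a := hxF f a hf heq (by rw [← hHi]; exact hsub i)
    filter_upwards with t
    constructor <;> simp [hxa, heq]
  · set c := f x - f p with hc
    have hδ : 0 < (a - f p) / (|c| + 1) := div_pos (by linarith) (by positivity)
    filter_upwards [eventually_abs_sub_lt 0 hδ] with t ht
    rw [sub_zero] at ht
    have h1 : |t * c| < a - f p := by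
      rw [abs_mul]
      calc |t| * |c| ≤ |t| * (|c| + 1) := by nlinarith [abs_nonneg t]
        _ < (a - f p) / (|c| + 1) * (|c| + 1) := by
            apply mul_lt_mul_of_pos_right ht; positivity
        _ = a - f p := by field_simp
    have h2 := abs_lt.1 h1
    constructor <;> linarith [h2.1, h2.2]

/-- Every extreme point of the intersection of a nonempty subfamily of
the polyhedra is a vertex of the induced subdivision. -/
theorem extremePoint_of_inter_is_subdivision_vertex (d m : ℕ)
    (P : Fin m → Set (Fin d → ℝ)) (hP : ∀ j, IsPolyhedron (Fin d → ℝ) (P j))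
    (S : Finset (Fin m)) (hS : S.Nonempty) (p : Fin d → ℝ)
    (hp : p ∈ Set.extremePoints ℝ (⋂ j ∈ S, P j)) :
    IsSubdivVertex P p := by
  have hpQ : p ∈ ⋂ j ∈ S, P j := hp.1
  have hmem : ∀ j ∈ S, p ∈ P j := fun j hj => Set.mem_iInter₂.1 hpQ j hj
  rw [IsSubdivVertex, Set.eq_singleton_iff_unique_mem]
  constructor
  · refine Set.mem_iInter₂.2 fun j hj => ⟨hj, ?_⟩
    simp only [Set.mem_iInter, Set.mem_setOf_eq]
    intro f a hf hfp hsub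
    exact hfp
  · intro x hx
    have hxF : ∀ j ∈ S, x ∈ minFace (P j) p := fun j hj =>
      Set.mem_iInter₂.1 hx j (hmem j hj)
    have hev : ∀ᶠ t : ℝ in 𝓝 0, ∀ j ∈ S,
        p + t • (x - p) ∈ P j ∧ p - t • (x - p) ∈ P j :=
      (Filter.eventually_all_finset S).2
        (fun j hj => minFace_key (hP j) (hmem j hj) (hxF j hj))
    have hne : ∃ t : ℝ, t ≠ 0 ∧ ∀ j ∈ S,
        p + t • (x - p) ∈ P j ∧ p - t • (x - p) ∈ P j := by
      have h1 : ∀ᶠ t : ℝ in 𝓝[≠] 0, t ≠ 0 := eventually_mem_nhdsWithin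
      have h2 : ∀ᶠ t : ℝ in 𝓝[≠] (0:ℝ), ∀ j ∈ S,
          p + t • (x - p) ∈ P j ∧ p - t • (x - p) ∈ P j :=
        hev.filter_mono nhdsWithin_le_nhds
      exact (h1.and h2).exists
    obtain ⟨t, ht0, htm⟩ := hne
    have hy : p + t • (x - p) ∈ ⋂ j ∈ S, P j :=
      Set.mem_iInter₂.2 fun j hj => (htm j hj).1
    have hz : p - t • (x - p) ∈ ⋂ j ∈ S, P j :=
      Set.mem_iInter₂.2 fun j hj => (htm j hj).2
    have hseg : p ∈ openSegment ℝ (p + t • (x - p)) (p - t • (x - p)) :=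
      ⟨1/2, 1/2, by norm_num, by norm_num, by norm_num, by module⟩
    obtain ⟨-, hp2⟩ := mem_extremePoints.1 hp
    have heq := (hp2 _ hy _ hz hseg).1
    have : t • (x - p) = 0 := by
      have := congrArg (fun y => y - p) heq
      simpa [add_sub_cancel_left] using this
    rcases smul_eq_zero.1 this with h | h
    · exact absurd h ht0
    · exact (sub_eq_zero.1 h)
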